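/- Let T : D → D be a weak-contraction with fixed point u*, and let {x_n} and {q_n} be the Picard-S and SP iterative sequences respectively with common parameter sequences a_n⁰, a_n¹, a_n² ∈ [0,1] satisfying ∑ a_k¹ a_k² = ∞. If x_n → u*, then q_n → u*. -/

import Mathlib

theorem picardS_to_SP_equivalence {E : Type*} [NormedAddCommGroup E] [NormedSpace ℝ E]
    (D : Set E) (hDne : D.Nonempty) (hDcl : IsClosed D) (hDconv : Convex ℝ D)
    (T : E → E) (hTD : Set.MapsTo T D D)
    (δ L : ℝ) (hδ : δ ∈ Set.Ioo (0 : ℝ) 1) (hL : 0 ≤ L)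
    (hT : ∀ x ∈ D, ∀ y ∈ D, ‖T x - T y‖ ≤ δ * ‖x - y‖ + L * ‖y - T y‖)
    (u : E) (huD : u ∈ D) (hu : T u = u)
    (a0 a1 a2 : ℕ → ℝ)
    (ha0 : ∀ n, a0 n ∈ Set.Icc (0 : ℝ) 1) (ha1 : ∀ n, a1 n ∈ Set.Icc (0 : ℝ) 1)
    (ha2 : ∀ n, a2 n ∈ Set.Icc (0 : ℝ) 1)
    (hdiv : Filter.Tendsto (fun N => ∑ k ∈ Finset.range N, a1 k * a2 k) Filter.atTop Filter.atTop)
    (x y z : ℕ → E) (hxD : ∀ n, x n ∈ D) (hyD : ∀ n, y n ∈ D) (hzD : ∀ n, z n ∈ D)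
    (hx : ∀ n, x (n + 1) = T (y n))
    (hy : ∀ n, y n = (1 - a1 n) • T (x n) + a1 n • T (z n))
    (hz : ∀ n, z n = (1 - a2 n) • x n + a2 n • T (x n))
    (q r s : ℕ → E) (hqD : ∀ n, q n ∈ D) (hrD : ∀ n, r n ∈ D) (hsD : ∀ n, s n ∈ D)
    (hq : ∀ n, q (n + 1) = (1 - a0 n) • r n + a0 n • T (r n))
    (hr : ∀ n, r n = (1 - a1 n) • s n + a1 n • T (s n))
    (hs : ∀ n, s n = (1 - a2 n) • q n + a2 n • T (q n))
    (hxconv : Filter.Tendsto x Filter.atTop (nhds u)) :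
    Filter.Tendsto q Filter.atTop (nhds u) := by
  obtain ⟨hδ0, hδ1⟩ := hδ
  set ε := 1 - δ with hε
  have hε0 : 0 < ε := by simp only [hε]; linarith
  have hε1 : ε ≤ 1 := by simp only [hε]; linarith
  have hTu : ∀ v ∈ D, ‖T v - u‖ ≤ δ * ‖v - u‖ := by
    intro v hv
    have h := hT v hv u huD
    rw [hu] at h
    simpa using h
  have key : ∀ (a : ℝ), a ∈ Set.Icc (0:ℝ) 1 → ∀ p ∈ D,
      ‖(1 - a) • p + a • T p - u‖ ≤ (1 - ε * a) * ‖p - u‖ := by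
    rintro a ⟨ha, ha'⟩ p hp
    have h1 : (1 - a) • p + a • T p - u = (1 - a) • (p - u) + a • (T p - u) := by
      module
    rw [h1]
    calc ‖(1 - a) • (p - u) + a • (T p - u)‖
        ≤ ‖(1 - a) • (p - u)‖ + ‖a • (T p - u)‖ := norm_add_le _ _
      _ = (1 - a) * ‖p - u‖ + a * ‖T p - u‖ := by
          rw [norm_smul, norm_smul, Real.norm_eq_abs, Real.norm_eq_abs,
            abs_of_nonneg (by linarith), abs_of_nonneg ha]
      _ ≤ (1 - a) * ‖p - u‖ + a * (δ * ‖p - u‖) := by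
          gcongr
          exact hTu p hp
      _ = (1 - ε * a) * ‖p - u‖ := by rw [hε]; ring
  have step : ∀ n, ‖q (n+1) - u‖ ≤ Real.exp (-(ε * (a1 n * a2 n))) * ‖q n - u‖ := by
    intro n
    obtain ⟨h10, h11⟩ := ha1 n
    obtain ⟨h20, h21⟩ := ha2 n
    have hsb : ‖s n - u‖ ≤ (1 - ε * a2 n) * ‖q n - u‖ := by
      rw [hs n]; exact key _ (ha2 n) _ (hqD n)
    have hrb : ‖r n - u‖ ≤ (1 - ε * a1 n) * ‖s n - u‖ := by
      rw [hr n]; exact key _ (ha1 n) _ (hsD n)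
    have hqb : ‖q (n+1) - u‖ ≤ (1 - ε * a0 n) * ‖r n - u‖ := by
      rw [hq n]; exact key _ (ha0 n) _ (hrD n)
    have hqb' : ‖q (n+1) - u‖ ≤ ‖r n - u‖ := by
      refine hqb.trans ?_
      have := (ha0 n).1
      have := (ha0 n).2
      nlinarith [norm_nonneg (r n - u), mul_nonneg hε0.le (ha0 n).1]
    have hchain : ‖q (n+1) - u‖ ≤ (1 - ε * a1 n) * ((1 - ε * a2 n) * ‖q n - u‖) := by
      refine hqb'.trans (hrb.trans ?_)
      have h1 : 0 ≤ 1 - ε * a1 n := by nlinarith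
      exact mul_le_mul_of_nonneg_left hsb h1
    have hprod : (1 - ε * a1 n) * (1 - ε * a2 n) ≤ 1 - ε * (a1 n * a2 n) := by
      nlinarith [mul_nonneg h10 (sub_nonneg.mpr h21), mul_nonneg h20 (sub_nonneg.mpr h11),
        mul_nonneg (mul_nonneg h10 h20) (sub_nonneg.mpr hε1), hε0.le]
    have hexp : 1 - ε * (a1 n * a2 n) ≤ Real.exp (-(ε * (a1 n * a2 n))) := by
      have := Real.add_one_le_exp (-(ε * (a1 n * a2 n)))
      linarith
    calc ‖q (n+1) - u‖ ≤ (1 - ε * a1 n) * (1 - ε * a2 n) * ‖q n - u‖ := by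
          rw [mul_assoc]; exact hchain
      _ ≤ Real.exp (-(ε * (a1 n * a2 n))) * ‖q n - u‖ :=
          mul_le_mul_of_nonneg_right (hprod.trans hexp) (norm_nonneg _)
  have bound : ∀ n, ‖q n - u‖ ≤
      Real.exp (-(ε * ∑ k ∈ Finset.range n, a1 k * a2 k)) * ‖q 0 - u‖ := by
    intro n
    induction n with
    | zero => simp
    | succ n ih =>
      calc ‖q (n+1) - u‖ ≤ Real.exp (-(ε * (a1 n * a2 n))) * ‖q n - u‖ := step n
        _ ≤ Real.exp (-(ε * (a1 n * a2 n))) *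
            (Real.exp (-(ε * ∑ k ∈ Finset.range n, a1 k * a2 k)) * ‖q 0 - u‖) := by
            gcongr
        _ = Real.exp (-(ε * ∑ k ∈ Finset.range (n+1), a1 k * a2 k)) * ‖q 0 - u‖ := by
            rw [← mul_assoc, ← Real.exp_add, Finset.sum_range_succ]
            ring_nf
  have hexp0 : Filter.Tendsto
      (fun n => Real.exp (-(ε * ∑ k ∈ Finset.range n, a1 k * a2 k)) * ‖q 0 - u‖)
      Filter.atTop (nhds 0) := by
    have h1 : Filter.Tendsto (fun n => -(ε * ∑ k ∈ Finset.range n, a1 k * a2 k))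
        Filter.atTop Filter.atBot := by
      apply Filter.Tendsto.const_mul_atTop_of_neg (by linarith : -ε < 0) at hdiv
      simpa [neg_mul] using hdiv
    have := (Real.tendsto_exp_atBot.comp h1).mul_const ‖q 0 - u‖
    simpa using this
  have hq0 : Filter.Tendsto (fun n => ‖q n - u‖) Filter.atTop (nhds 0) :=
    squeeze_zero (fun n => norm_nonneg _) bound hexp0
  exact tendsto_iff_norm_sub_tendsto_zero.mpr hq0
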